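/- (Theorem 1: optimality of the trivial protocol for one-server Q-QPIR without prior entanglement.) For any r-round one-server quantum private information retrieval protocol for quantum messages, without prior entanglement, for f messages of dimensions d₁,…,d_f — given by the unitary data described in the context and satisfying the correctness condition and the secrecy condition in the final-state criterion under the honest-server model — the communication complexity satisfies CC = ∑_{i=1}^{r} (log q_i + log a_i) ≥ ∑_{ℓ=1}^{f} log d_ℓ, where q_i and a_i are the dimensions of the i-th query and answer systems. -/

import Mathlib

open Matrix

/-- The global state vector after the user's unitary `D⁽ⁱ⁾`, on the systems
`R_{[f]} ⊗ S⁽ⁱ⁾ ⊗ Q⁽ⁱ⁺¹⁾ ⊗ T⁽ⁱ⁺¹⁾`.  The initial state is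
`(⊗_ℓ ψ_ℓ) ⊗ |k⟩_{A⁽⁰⁾} ⊗ |0⟩_{T⁽⁰⁾}` (each `ψ_ℓ` a purification on `X_ℓ ⊗ R_ℓ`,
the server's initial system `S⁽⁰⁾ = X₁ ⊗ ⋯ ⊗ X_f` identified via `eS`); then the maps
`D⁽⁰⁾, E⁽¹⁾, D⁽¹⁾, E⁽²⁾, …` are applied alternately, each extended by the identity. -/
noncomputable def afterD (f : ℕ) (d : Fin f → ℕ) (q a t s : ℕ → ℕ)
    (eS : (∀ ℓ, Fin (d ℓ)) ≃ Fin (s 0))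
    (D0 : Matrix (Fin (q 1) × Fin (t 1)) (Fin f × Fin (t 0)) ℂ)
    (Dmat : (i : ℕ) → Matrix (Fin (q (i + 2)) × Fin (t (i + 2)))
      (Fin (a (i + 1)) × Fin (t (i + 1))) ℂ)
    (Emat : (i : ℕ) → Matrix (Fin (a (i + 1)) × Fin (s (i + 1)))
      (Fin (q (i + 1)) × Fin (s i)) ℂ)
    (k : Fin f) (ψ : ∀ ℓ, Fin (d ℓ) × Fin (d ℓ) → ℂ) (t0 : Fin (t 0)) :
    (i : ℕ) → ((∀ ℓ, Fin (d ℓ)) × Fin (s i) × (Fin (q (i + 1)) × Fin (t (i + 1))) → ℂ)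
  | 0 => fun p => ∑ c : Fin f, ∑ u : Fin (t 0),
      D0 (p.2.2.1, p.2.2.2) (c, u) *
        ((if c = k ∧ u = t0 then 1 else 0) * ∏ ℓ, ψ ℓ (eS.symm p.2.1 ℓ, p.1 ℓ))
  | (i + 1) => fun p => ∑ av : Fin (a (i + 1)), ∑ tv : Fin (t (i + 1)),
      Dmat i (p.2.2.1, p.2.2.2) (av, tv) *
        (∑ qv : Fin (q (i + 1)), ∑ sv : Fin (s i),
          Emat i (av, p.2.1) (qv, sv) *
            afterD f d q a t s eS D0 Dmat Emat k ψ t0 i (p.1, sv, (qv, tv)))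

/-- The final global state vector of an `(r+1)`-round protocol, on
`R_{[f]} ⊗ S⁽ʳ⁺¹⁾ ⊗ Y ⊗ E`: the last answer unitary `E⁽ʳ⁺¹⁾` followed by the user's
reconstruction unitary `D⁽ʳ⁺¹⁾ : A⁽ʳ⁺¹⁾ ⊗ T⁽ʳ⁺¹⁾ → Y ⊗ E`. -/
noncomputable def finalVec (f : ℕ) (d : Fin f → ℕ) (r : ℕ) (q a t s : ℕ → ℕ) (DD ee : ℕ)
    (eS : (∀ ℓ, Fin (d ℓ)) ≃ Fin (s 0))
    (D0 : Matrix (Fin (q 1) × Fin (t 1)) (Fin f × Fin (t 0)) ℂ)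
    (Dmat : (i : ℕ) → Matrix (Fin (q (i + 2)) × Fin (t (i + 2)))
      (Fin (a (i + 1)) × Fin (t (i + 1))) ℂ)
    (Emat : (i : ℕ) → Matrix (Fin (a (i + 1)) × Fin (s (i + 1)))
      (Fin (q (i + 1)) × Fin (s i)) ℂ)
    (Dr : Matrix (Fin DD × Fin ee) (Fin (a (r + 1)) × Fin (t (r + 1))) ℂ)
    (k : Fin f) (ψ : ∀ ℓ, Fin (d ℓ) × Fin (d ℓ) → ℂ) (t0 : Fin (t 0)) :
    (∀ ℓ, Fin (d ℓ)) × Fin (s (r + 1)) × (Fin DD × Fin ee) → ℂ :=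
  fun p => ∑ av : Fin (a (r + 1)), ∑ tv : Fin (t (r + 1)),
    Dr (p.2.2.1, p.2.2.2) (av, tv) *
      (∑ qv : Fin (q (r + 1)), ∑ sv : Fin (s r),
        Emat r (av, p.2.1) (qv, sv) *
          afterD f d q a t s eS D0 Dmat Emat k ψ t0 r (p.1, sv, (qv, tv)))

/-- The final marginal (reduced density matrix) on `Y ⊗ R_k`. -/
noncomputable def margYR (f : ℕ) (d : Fin f → ℕ) (r : ℕ) (q a t s : ℕ → ℕ) (DD ee : ℕ)
    (eS : (∀ ℓ, Fin (d ℓ)) ≃ Fin (s 0))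
    (D0 : Matrix (Fin (q 1) × Fin (t 1)) (Fin f × Fin (t 0)) ℂ)
    (Dmat : (i : ℕ) → Matrix (Fin (q (i + 2)) × Fin (t (i + 2)))
      (Fin (a (i + 1)) × Fin (t (i + 1))) ℂ)
    (Emat : (i : ℕ) → Matrix (Fin (a (i + 1)) × Fin (s (i + 1)))
      (Fin (q (i + 1)) × Fin (s i)) ℂ)
    (Dr : Matrix (Fin DD × Fin ee) (Fin (a (r + 1)) × Fin (t (r + 1))) ℂ)
    (k : Fin f) (ψ : ∀ ℓ, Fin (d ℓ) × Fin (d ℓ) → ℂ) (t0 : Fin (t 0)) :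
    Matrix (Fin DD × Fin (d k)) (Fin DD × Fin (d k)) ℂ :=
  Matrix.of fun p₁ p₂ =>
    ∑ sv : Fin (s (r + 1)), ∑ ev : Fin ee,
      ∑ z : ∀ j : {j : Fin f // j ≠ k}, Fin (d j),
        finalVec f d r q a t s DD ee eS D0 Dmat Emat Dr k ψ t0
            ((Equiv.piSplitAt k (fun ℓ => Fin (d ℓ))).symm (p₁.2, z), sv, (p₁.1, ev)) *
        (starRingEnd ℂ) (finalVec f d r q a t s DD ee eS D0 Dmat Emat Dr k ψ t0
            ((Equiv.piSplitAt k (fun ℓ => Fin (d ℓ))).symm (p₂.2, z), sv, (p₂.1, ev)))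

/-- The final marginal (reduced density matrix) on `S⁽ʳ⁺¹⁾ ⊗ R_{[f]}`. -/
noncomputable def margSR (f : ℕ) (d : Fin f → ℕ) (r : ℕ) (q a t s : ℕ → ℕ) (DD ee : ℕ)
    (eS : (∀ ℓ, Fin (d ℓ)) ≃ Fin (s 0))
    (D0 : Matrix (Fin (q 1) × Fin (t 1)) (Fin f × Fin (t 0)) ℂ)
    (Dmat : (i : ℕ) → Matrix (Fin (q (i + 2)) × Fin (t (i + 2)))
      (Fin (a (i + 1)) × Fin (t (i + 1))) ℂ)
    (Emat : (i : ℕ) → Matrix (Fin (a (i + 1)) × Fin (s (i + 1)))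
      (Fin (q (i + 1)) × Fin (s i)) ℂ)
    (Dr : Matrix (Fin DD × Fin ee) (Fin (a (r + 1)) × Fin (t (r + 1))) ℂ)
    (k : Fin f) (ψ : ∀ ℓ, Fin (d ℓ) × Fin (d ℓ) → ℂ) (t0 : Fin (t 0)) :
    Matrix ((∀ ℓ, Fin (d ℓ)) × Fin (s (r + 1))) ((∀ ℓ, Fin (d ℓ)) × Fin (s (r + 1))) ℂ :=
  Matrix.of fun u w =>
    ∑ y : Fin DD, ∑ ev : Fin ee,
      finalVec f d r q a t s DD ee eS D0 Dmat Emat Dr k ψ t0 (u.1, u.2, (y, ev)) *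
      (starRingEnd ℂ) (finalVec f d r q a t s DD ee eS D0 Dmat Emat Dr k ψ t0
        (w.1, w.2, (y, ev)))

section Aux

open Finset

/-- `M` factors through `ℂ^n`. -/
def FacLe {α β : Type*} (n : ℕ) (M : α → β → ℂ) : Prop :=
  ∃ g : α → Fin n → ℂ, ∃ h : Fin n → β → ℂ, ∀ p w, M p w = ∑ j, g p j * h j w

lemma FacLe.congr {α β : Type*} {n : ℕ} {M M' : α → β → ℂ} (h : FacLe n M)
    (he : ∀ p w, M p w = M' p w) : FacLe n M' := by
  obtain ⟨g, hh, e⟩ := h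
  exact ⟨g, hh, fun p w => (he p w).symm.trans (e p w)⟩

lemma card_le_of_factor {α β ι : Type*} [Fintype α] [Fintype ι] {n : ℕ}
    {ρ : α → β → ℂ} (hfac : FacLe n ρ)
    (cols : ι → β) (hind : LinearIndependent ℂ (fun i => (fun p => ρ p (cols i)))) :
    Fintype.card ι ≤ n := by
  classical
  obtain ⟨g, h, hfac⟩ := hfac
  set W : Submodule ℂ (α → ℂ) :=
    Submodule.span ℂ (Set.range (fun j : Fin n => fun p => g p j)) with hW
  have hmem : ∀ i, (fun p => ρ p (cols i)) ∈ W := by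
    intro i
    have : (fun p => ρ p (cols i)) = ∑ j : Fin n, h j (cols i) • (fun p => g p j) := by
      funext p
      simp only [Finset.sum_apply, Pi.smul_apply, smul_eq_mul, hfac]
      exact Finset.sum_congr rfl fun j _ => mul_comm _ _
    rw [this]
    exact Submodule.sum_mem _ fun j _ => Submodule.smul_mem _ _ (Submodule.subset_span ⟨j, rfl⟩)
  have hind' : LinearIndependent ℂ (fun i : ι => (⟨_, hmem i⟩ : W)) :=
    hind.of_comp W.subtype
  have h1 : Fintype.card ι ≤ Module.finrank ℂ W := hind'.fintype_card_le_finrank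
  have h2 : Module.finrank ℂ W ≤ Fintype.card (Fin n) :=
    finrank_range_le_card (fun j : Fin n => fun p => g p j)
  simpa using h1.trans h2

lemma rank_one_factor {α β : Type*} [Fintype α] [Fintype β]
    (M : α → β → ℂ) (η : α → ℂ)
    (hM : ∀ p₁ p₂, ∑ w, M p₁ w * (starRingEnd ℂ) (M p₂ w) = η p₁ * (starRingEnd ℂ) (η p₂))
    (hη : ∑ p, η p * (starRingEnd ℂ) (η p) = 1) :
    ∀ p w, M p w = η p * (∑ p', (starRingEnd ℂ) (η p') * M p' w) := by
  classical
  set c : β → ℂ := fun w => ∑ p', (starRingEnd ℂ) (η p') * M p' w with hc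
  have hT : ∑ w, c w * (starRingEnd ℂ) (c w) = 1 := by
    have : ∀ w, c w * (starRingEnd ℂ) (c w)
        = ∑ p : α, ∑ p' : α, ((starRingEnd ℂ) (η p) * η p') * (M p w * (starRingEnd ℂ) (M p' w)) := by
      intro w
      calc c w * (starRingEnd ℂ) (c w)
          = (∑ p, (starRingEnd ℂ) (η p) * M p w) * (∑ p', η p' * (starRingEnd ℂ) (M p' w)) := by
            rw [hc]; congr 1
            rw [map_sum]
            exact Finset.sum_congr rfl fun p' _ => by
              simp [_root_.map_mul, Complex.conj_conj]
        _ = ∑ p : α, ∑ p' : α, ((starRingEnd ℂ) (η p) * η p') * (M p w * (starRingEnd ℂ) (M p' w)) := by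
            rw [Finset.sum_mul_sum]
            exact Finset.sum_congr rfl fun p _ => Finset.sum_congr rfl fun p' _ => by ring
    calc ∑ w, c w * (starRingEnd ℂ) (c w)
        = ∑ p : α, ∑ p' : α, ((starRingEnd ℂ) (η p) * η p') * ∑ w, M p w * (starRingEnd ℂ) (M p' w) := by
          simp only [this]
          rw [Finset.sum_comm]
          refine Finset.sum_congr rfl fun p _ => ?_
          rw [Finset.sum_comm]
          refine Finset.sum_congr rfl fun p' _ => ?_
          rw [Finset.mul_sum]
      _ = (∑ p, η p * (starRingEnd ℂ) (η p)) * (∑ p', η p' * (starRingEnd ℂ) (η p')) := by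
          simp only [hM, Finset.sum_mul, Finset.mul_sum]
          refine Finset.sum_congr rfl fun p _ => Finset.sum_congr rfl fun p' _ => by ring
      _ = 1 := by rw [hη, one_mul]
  have hmix : ∑ p, ∑ w, M p w * (starRingEnd ℂ) (η p * c w) = 1 := by
    calc ∑ p, ∑ w, M p w * (starRingEnd ℂ) (η p * c w)
        = ∑ w, (∑ p, (starRingEnd ℂ) (η p) * M p w) * (starRingEnd ℂ) (c w) := by
          rw [Finset.sum_comm]
          refine Finset.sum_congr rfl fun w _ => ?_
          rw [Finset.sum_mul]
          exact Finset.sum_congr rfl fun p _ => by simp [_root_.map_mul]; ring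
      _ = ∑ w, c w * (starRingEnd ℂ) (c w) := rfl
      _ = 1 := hT
  have hMM : ∑ p, ∑ w, M p w * (starRingEnd ℂ) (M p w) = 1 := by
    calc ∑ p, ∑ w, M p w * (starRingEnd ℂ) (M p w) = ∑ p, η p * (starRingEnd ℂ) (η p) :=
          Finset.sum_congr rfl fun p _ => hM p p
      _ = 1 := hη
  have hlast : ∑ p, ∑ w, (η p * c w) * (starRingEnd ℂ) (η p * c w) = 1 := by
    calc ∑ p, ∑ w, (η p * c w) * (starRingEnd ℂ) (η p * c w)
        = (∑ p, η p * (starRingEnd ℂ) (η p)) * (∑ w, c w * (starRingEnd ℂ) (c w)) := by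
          rw [Finset.sum_mul]
          refine Finset.sum_congr rfl fun p _ => ?_
          rw [Finset.mul_sum]
          exact Finset.sum_congr rfl fun w _ => by simp [_root_.map_mul]; ring
      _ = 1 := by rw [hη, hT, one_mul]
  have hzero : ∑ p, ∑ w, (M p w - η p * c w) * (starRingEnd ℂ) (M p w - η p * c w) = 0 := by
    have expand : ∀ p w, (M p w - η p * c w) * (starRingEnd ℂ) (M p w - η p * c w)
        = M p w * (starRingEnd ℂ) (M p w) - M p w * (starRingEnd ℂ) (η p * c w)
          - (η p * c w) * (starRingEnd ℂ) (M p w) + (η p * c w) * (starRingEnd ℂ) (η p * c w) := by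
      intro p w; simp only [_root_.map_sub]; ring
    simp only [expand, Finset.sum_add_distrib, Finset.sum_sub_distrib]
    have hmix2 : ∑ p, ∑ w, (η p * c w) * (starRingEnd ℂ) (M p w) = 1 := by
      have : ∀ p w, (η p * c w) * (starRingEnd ℂ) (M p w)
          = (starRingEnd ℂ) (M p w * (starRingEnd ℂ) (η p * c w)) := by
        intro p w
        simp only [_root_.map_mul, Complex.conj_conj, RingHom.id_apply, RingHomCompTriple.comp_apply]
        ring
      simp only [this, ← map_sum, hmix, _root_.map_one]
    rw [hMM, hmix, hmix2, hlast]; ring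
  have hnn : ∀ p w, Complex.normSq (M p w - η p * c w) = 0 := by
    have hre : ∑ p, ∑ w, Complex.normSq (M p w - η p * c w) = 0 := by
      have hz' : ((∑ p, ∑ w, Complex.normSq (M p w - η p * c w) : ℝ) : ℂ) = 0 := by
        push_cast
        rw [← hzero]
        exact Finset.sum_congr rfl fun p _ => Finset.sum_congr rfl fun w _ =>
          (Complex.mul_conj _).symm
      exact_mod_cast hz'
    intro p w
    have h1 : ∀ p ∈ (Finset.univ : Finset α),
        (0:ℝ) ≤ ∑ w, Complex.normSq (M p w - η p * c w) :=
      fun p _ => Finset.sum_nonneg fun w _ => Complex.normSq_nonneg _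
    have h2 := (Finset.sum_eq_zero_iff_of_nonneg h1).mp hre p (Finset.mem_univ p)
    have h3 := (Finset.sum_eq_zero_iff_of_nonneg
      (fun w _ => Complex.normSq_nonneg (M p w - η p * c w))).mp h2 w (Finset.mem_univ w)
    exact h3
  intro p w
  have := Complex.normSq_eq_zero.mp (hnn p w)
  linear_combination this

lemma FacLe.step {α σ' γ : Type*} {aa qq tt ss n : ℕ}
    {M : (α × Fin ss) → (Fin qq × Fin tt) → ℂ} (hM : FacLe n M)
    (D : γ → Fin aa × Fin tt → ℂ) (E : Fin aa × σ' → Fin qq × Fin ss → ℂ) :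
    FacLe (n * (aa * qq))
      (fun (p : α × σ') (w : γ) => ∑ av : Fin aa, ∑ tv : Fin tt, D w (av, tv) *
        ∑ qv : Fin qq, ∑ sv : Fin ss, E (av, p.2) (qv, sv) * M (p.1, sv) (qv, tv)) := by
  classical
  obtain ⟨g, h, hgh⟩ := hM
  set e : Fin n × (Fin aa × Fin qq) ≃ Fin (n * (aa * qq)) :=
    (Equiv.prodCongr (Equiv.refl (Fin n)) finProdFinEquiv).trans finProdFinEquiv with he
  refine ⟨fun p j => ∑ sv : Fin ss, E ((e.symm j).2.1, p.2) ((e.symm j).2.2, sv) *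
      g (p.1, sv) (e.symm j).1,
    fun j w => ∑ tv : Fin tt, D w ((e.symm j).2.1, tv) * h (e.symm j).1 ((e.symm j).2.2, tv),
    fun p w => ?_⟩
  rw [← Equiv.sum_comp e (fun j => _ * _)]
  simp only [Equiv.symm_apply_apply]
  have rhs_eq : ∑ x : Fin n × Fin aa × Fin qq,
      (∑ sv : Fin ss, E (x.2.1, p.2) (x.2.2, sv) * g (p.1, sv) x.1) *
      (∑ tv : Fin tt, D w (x.2.1, tv) * h x.1 (x.2.2, tv))
      = ∑ x : Fin n × Fin aa × Fin qq, ∑ sv : Fin ss, ∑ tv : Fin tt,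
        D w (x.2.1, tv) * (E (x.2.1, p.2) (x.2.2, sv) * (g (p.1, sv) x.1 * h x.1 (x.2.2, tv))) := by
    refine Finset.sum_congr rfl fun x _ => ?_
    rw [Finset.sum_mul_sum]
    exact Finset.sum_congr rfl fun sv _ => Finset.sum_congr rfl fun tv _ => by ring
  rw [rhs_eq]
  have lhs_eq : ∑ av : Fin aa, ∑ tv : Fin tt, D w (av, tv) *
      ∑ qv : Fin qq, ∑ sv : Fin ss, E (av, p.2) (qv, sv) * M (p.1, sv) (qv, tv)
      = ∑ y : Fin aa × Fin tt × Fin qq × Fin ss × Fin n,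
        D w (y.1, y.2.1) * (E (y.1, p.2) (y.2.2.1, y.2.2.2.1) *
          (g (p.1, y.2.2.2.1) y.2.2.2.2 * h y.2.2.2.2 (y.2.2.1, y.2.1))) := by
    simp only [hgh, Finset.mul_sum, Fintype.sum_prod_type]
  rw [lhs_eq]
  rw [show ∑ x : Fin n × Fin aa × Fin qq, ∑ sv : Fin ss, ∑ tv : Fin tt,
        D w (x.2.1, tv) * (E (x.2.1, p.2) (x.2.2, sv) * (g (p.1, sv) x.1 * h x.1 (x.2.2, tv)))
      = ∑ z : (Fin n × Fin aa × Fin qq) × Fin ss × Fin tt,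
        D w (z.1.2.1, z.2.2) * (E (z.1.2.1, p.2) (z.1.2.2, z.2.1) *
          (g (p.1, z.2.1) z.1.1 * h z.1.1 (z.1.2.2, z.2.2))) from by
    simp only [Fintype.sum_prod_type]]
  refine Fintype.sum_equiv ⟨fun y => ((y.2.2.2.2, y.1, y.2.2.1), y.2.2.2.1, y.2.1),
    fun z => (z.1.2.1, z.2.2, z.1.2.2, z.2.1, z.1.1), ?_, ?_⟩ _ _ ?_
  · rintro ⟨a, b, c, d, e⟩; rfl
  · rintro ⟨⟨a, b, c⟩, d, e⟩; rfl
  · rintro ⟨a, b, c, d, e⟩; rfl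

lemma FacLe.gram {α β γ : Type*} [Fintype γ] {n : ℕ} {M : α → γ → ℂ}
    (hM : FacLe n M) (M' : β → γ → ℂ) :
    FacLe n (fun u w => ∑ cc : γ, M u cc * (starRingEnd ℂ) (M' w cc)) := by
  obtain ⟨g, h, hgh⟩ := hM
  refine ⟨g, fun j w => ∑ cc : γ, h j cc * (starRingEnd ℂ) (M' w cc), fun u w => ?_⟩
  calc ∑ cc : γ, M u cc * (starRingEnd ℂ) (M' w cc)
      = ∑ cc : γ, ∑ j, g u j * (h j cc * (starRingEnd ℂ) (M' w cc)) := by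
        refine Finset.sum_congr rfl fun cc _ => ?_
        rw [hgh, Finset.sum_mul]
        exact Finset.sum_congr rfl fun j _ => by ring
    _ = ∑ j, ∑ cc : γ, g u j * (h j cc * (starRingEnd ℂ) (M' w cc)) := Finset.sum_comm
    _ = ∑ j, g u j * ∑ cc : γ, h j cc * (starRingEnd ℂ) (M' w cc) := by
        exact Finset.sum_congr rfl fun j _ => by rw [Finset.mul_sum]

end Aux

/-- Theorem 1: optimality of the trivial protocol for one-server Q-QPIR without prior
entanglement.  For any `(r+1)`-round one-server QPIR protocol for `f` quantum messages of
dimensions `d₁,…,d_f` — given by unitaries `D⁽⁰⁾,…,D⁽ʳ⁺¹⁾` (the user's maps, the last one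
producing the output system `Y = ℂ^DD` with fixed isometries `ι_ℓ : ℂ^{d_ℓ} → ℂ^DD` and a
junk system `E = ℂ^ee`) and `E⁽¹⁾,…,E⁽ʳ⁺¹⁾` (the honest server's maps) — satisfying
correctness and the secrecy condition in the final-state criterion under the
honest-server model, the communication complexity satisfies
`∑_{i=1}^{r+1} (log qᵢ + log aᵢ) ≥ ∑_{ℓ=1}^f log d_ℓ`. -/
theorem trivial_protocol_optimal
    (f : ℕ) (hf : 0 < f) (d : Fin f → ℕ) (hd : ∀ ℓ, 0 < d ℓ)
    (r : ℕ) (q a t s : ℕ → ℕ) (DD ee : ℕ)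
    (hq : ∀ i, 0 < q i) (ha : ∀ i, 0 < a i) (ht : ∀ i, 0 < t i) (hs : ∀ i, 0 < s i)
    (hDD : 0 < DD) (hee : 0 < ee)
    (eS : (∀ ℓ, Fin (d ℓ)) ≃ Fin (s 0))
    (D0 : Matrix (Fin (q 1) × Fin (t 1)) (Fin f × Fin (t 0)) ℂ)
    (Dmat : (i : ℕ) → Matrix (Fin (q (i + 2)) × Fin (t (i + 2)))
      (Fin (a (i + 1)) × Fin (t (i + 1))) ℂ)
    (Emat : (i : ℕ) → Matrix (Fin (a (i + 1)) × Fin (s (i + 1)))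
      (Fin (q (i + 1)) × Fin (s i)) ℂ)
    (Dr : Matrix (Fin DD × Fin ee) (Fin (a (r + 1)) × Fin (t (r + 1))) ℂ)
    -- all the protocol maps are unitary:
    (hD0 : D0 * D0ᴴ = 1 ∧ D0ᴴ * D0 = 1)
    (hDmat : ∀ i < r, Dmat i * (Dmat i)ᴴ = 1 ∧ (Dmat i)ᴴ * Dmat i = 1)
    (hEmat : ∀ i ≤ r, Emat i * (Emat i)ᴴ = 1 ∧ (Emat i)ᴴ * Emat i = 1)
    (hDr : Dr * Drᴴ = 1 ∧ Drᴴ * Dr = 1)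
    -- the fixed isometries identifying each message space inside `Y`:
    (ι : ∀ ℓ : Fin f, Matrix (Fin DD) (Fin (d ℓ)) ℂ)
    (hι : ∀ ℓ, (ι ℓ)ᴴ * ι ℓ = 1)
    -- correctness: the final marginal on `Y ⊗ R_k` is `(ι_k ⊗ I)|ψ_k⟩⟨ψ_k|(ι_k ⊗ I)†`
    -- for every user input `k` and all purified message inputs `ψ₁,…,ψ_f`:
    (hcorrect : ∀ (k : Fin f) (ψ : ∀ ℓ, Fin (d ℓ) × Fin (d ℓ) → ℂ),
      (∀ ℓ, ∑ p, Complex.normSq (ψ ℓ p) = 1) →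
      margYR f d r q a t s DD ee eS D0 Dmat Emat Dr k ψ ⟨0, ht 0⟩
        = Matrix.of fun p₁ p₂ =>
            (∑ x₁ : Fin (d k), ι k p₁.1 x₁ * ψ k (x₁, p₁.2)) *
            (starRingEnd ℂ) (∑ x₂ : Fin (d k), ι k p₂.1 x₂ * ψ k (x₂, p₂.2)))
    -- secrecy (final-state criterion, honest server): the final marginal on
    -- `S⁽ʳ⁺¹⁾ ⊗ R_{[f]}` does not depend on the user's choice `k`:
    (hsecret : ∀ (ψ : ∀ ℓ, Fin (d ℓ) × Fin (d ℓ) → ℂ),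
      (∀ ℓ, ∑ p, Complex.normSq (ψ ℓ p) = 1) →
      ∀ k k' : Fin f,
        margSR f d r q a t s DD ee eS D0 Dmat Emat Dr k ψ ⟨0, ht 0⟩
          = margSR f d r q a t s DD ee eS D0 Dmat Emat Dr k' ψ ⟨0, ht 0⟩) :
    ∑ i ∈ Finset.range (r + 1), (Real.log (q (i + 1)) + Real.log (a (i + 1)))
      ≥ ∑ ℓ : Fin f, Real.log (d ℓ) := by
  classical
  set ψm : ∀ ℓ, Fin (d ℓ) × Fin (d ℓ) → ℂ :=
    fun ℓ p => if p.1 = p.2 then (((Real.sqrt (d ℓ))⁻¹ : ℝ) : ℂ) else 0 with hψm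
  have hdR : ∀ ℓ : Fin f, (0:ℝ) < (d ℓ : ℝ) := fun ℓ => by exact_mod_cast hd ℓ
  have hsqrt : ∀ ℓ : Fin f, ((((Real.sqrt (d ℓ))⁻¹ : ℝ) : ℂ)) *
      (starRingEnd ℂ) ((((Real.sqrt (d ℓ))⁻¹ : ℝ) : ℂ)) = ((d ℓ : ℝ) : ℂ)⁻¹ := by
    intro ℓ
    rw [Complex.conj_ofReal, ← Complex.ofReal_mul, ← mul_inv,
      Real.mul_self_sqrt (hdR ℓ).le, Complex.ofReal_inv]
  have hψnorm : ∀ ℓ, ∑ p, Complex.normSq (ψm ℓ p) = 1 := by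
    intro ℓ
    rw [Fintype.sum_prod_type]
    have hrow : ∀ x : Fin (d ℓ), ∑ y : Fin (d ℓ), Complex.normSq (ψm ℓ (x, y))
        = ((d ℓ : ℝ))⁻¹ := by
      intro x
      rw [Finset.sum_eq_single x]
      · simp only [hψm, if_true, eq_self_iff_true, Complex.normSq_ofReal]
        rw [← mul_inv, Real.mul_self_sqrt (hdR ℓ).le]
      · intro y _ hy
        simp only [hψm]
        rw [if_neg (by exact fun hxy => hy hxy.symm), Complex.normSq_zero]
      · intro h; exact absurd (Finset.mem_univ x) h
    simp only [hrow]
    rw [Finset.sum_const, Finset.card_univ, Fintype.card_fin, nsmul_eq_mul]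
    exact mul_inv_cancel₀ (hdR ℓ).ne'
  set k0 : Fin f := ⟨0, hf⟩ with hk0
  set ηf : (k : Fin f) → Fin DD × Fin (d k) → ℂ :=
    fun k p => ι k p.1 p.2 * (((Real.sqrt (d k))⁻¹ : ℝ) : ℂ) with hηf
  have hηsum : ∀ (k : Fin f) (p : Fin DD × Fin (d k)),
      (∑ x₁ : Fin (d k), ι k p.1 x₁ * ψm k (x₁, p.2)) = ηf k p := by
    intro k p
    simp only [hψm, hηf]
    calc ∑ x₁ : Fin (d k), ι k p.1 x₁ * (if x₁ = p.2 then (((Real.sqrt (d k))⁻¹ : ℝ) : ℂ) else 0)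
        = ∑ x₁ : Fin (d k), (if x₁ = p.2 then ι k p.1 x₁ * (((Real.sqrt (d k))⁻¹ : ℝ) : ℂ) else 0) := by
          refine Finset.sum_congr rfl fun x₁ _ => ?_
          split <;> simp
      _ = ι k p.1 p.2 * (((Real.sqrt (d k))⁻¹ : ℝ) : ℂ) := by
          rw [Finset.sum_ite_eq' Finset.univ p.2]
          simp
  have hηip : ∀ (k : Fin f) (x₁ x₂ : Fin (d k)),
      ∑ y : Fin DD, ηf k (y, x₁) * (starRingEnd ℂ) (ηf k (y, x₂))
        = if x₁ = x₂ then ((d k : ℝ) : ℂ)⁻¹ else 0 := by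
    intro k x₁ x₂
    have hι' : ∑ y : Fin DD, (starRingEnd ℂ) (ι k y x₂) * ι k y x₁
        = if x₂ = x₁ then 1 else 0 := by
      have h1 := congrFun (congrFun (hι k) x₂) x₁
      rw [Matrix.mul_apply] at h1
      simpa [Matrix.conjTranspose_apply, Matrix.one_apply] using h1
    calc ∑ y : Fin DD, ηf k (y, x₁) * (starRingEnd ℂ) (ηf k (y, x₂))
        = ∑ y : Fin DD, ((((Real.sqrt (d k))⁻¹ : ℝ) : ℂ) *
            (starRingEnd ℂ) ((((Real.sqrt (d k))⁻¹ : ℝ) : ℂ))) *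
            ((starRingEnd ℂ) (ι k y x₂) * ι k y x₁) := by
          refine Finset.sum_congr rfl fun y _ => ?_
          simp only [hηf, _root_.map_mul]
          ring
      _ = ((d k : ℝ) : ℂ)⁻¹ * (if x₂ = x₁ then 1 else 0) := by
          rw [← Finset.mul_sum, hι', hsqrt k]
      _ = if x₁ = x₂ then ((d k : ℝ) : ℂ)⁻¹ else 0 := by
          by_cases h : x₁ = x₂
          · rw [if_pos h, if_pos h.symm, mul_one]
          · rw [if_neg h, if_neg (fun hh => h hh.symm), mul_zero]
  have hηnorm : ∀ k : Fin f, ∑ p : Fin DD × Fin (d k),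
      ηf k p * (starRingEnd ℂ) (ηf k p) = 1 := by
    intro k
    rw [Fintype.sum_prod_type, Finset.sum_comm]
    calc ∑ x : Fin (d k), ∑ y : Fin DD, ηf k (y, x) * (starRingEnd ℂ) (ηf k (y, x))
        = ∑ _x : Fin (d k), ((d k : ℝ) : ℂ)⁻¹ := by
          refine Finset.sum_congr rfl fun x _ => ?_
          rw [hηip k x x, if_pos rfl]
      _ = 1 := by
          rw [Finset.sum_const, Finset.card_univ, Fintype.card_fin, nsmul_eq_mul]
          push_cast
          exact mul_inv_cancel₀ (by exact_mod_cast (hd k).ne')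
  -- upper bound: the final vector factors through the communication
  have hfacAfter : ∀ i : ℕ, FacLe (∏ j ∈ Finset.range i, (a (j+1) * q (j+1)))
      (fun (p : (∀ ℓ, Fin (d ℓ)) × Fin (s i)) (w : Fin (q (i+1)) × Fin (t (i+1))) =>
        afterD f d q a t s eS D0 Dmat Emat k0 ψm ⟨0, ht 0⟩ i (p.1, p.2, w)) := by
    intro i
    induction i with
    | zero =>
      rw [Finset.prod_range_zero]
      refine ⟨fun p (_ : Fin 1) => ∏ ℓ, ψm ℓ (eS.symm p.2 ℓ, p.1 ℓ),
        fun _ w => ∑ c : Fin f, ∑ u : Fin (t 0), D0 (w.1, w.2) (c, u) *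
          (if c = k0 ∧ u = ⟨0, ht 0⟩ then 1 else 0),
        fun p w => ?_⟩
      rw [Fin.sum_univ_one]
      simp only [afterD]
      rw [Finset.mul_sum]
      refine Finset.sum_congr rfl fun c _ => ?_
      rw [Finset.mul_sum]
      exact Finset.sum_congr rfl fun u _ => by ring
    | succ i ih =>
      rw [Finset.prod_range_succ]
      exact (ih.step (fun (w : Fin (q (i+2)) × Fin (t (i+2)))
          (z : Fin (a (i+1)) × Fin (t (i+1))) => Dmat i (w.1, w.2) z)
        (Emat i)).congr (fun p w => rfl)
  have hfacFin : FacLe (∏ j ∈ Finset.range (r+1), (a (j+1) * q (j+1)))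
      (fun (p : (∀ ℓ, Fin (d ℓ)) × Fin (s (r+1))) (w : Fin DD × Fin ee) =>
        finalVec f d r q a t s DD ee eS D0 Dmat Emat Dr k0 ψm ⟨0, ht 0⟩ (p.1, p.2, w)) := by
    rw [Finset.prod_range_succ]
    exact ((hfacAfter r).step (fun (w : Fin DD × Fin ee)
        (z : Fin (a (r+1)) × Fin (t (r+1))) => Dr (w.1, w.2) z)
      (Emat r)).congr (fun p w => rfl)
  set ρ := margSR f d r q a t s DD ee eS D0 Dmat Emat Dr k0 ψm ⟨0, ht 0⟩ with hρ
  have hfacρ : FacLe (∏ j ∈ Finset.range (r+1), (a (j+1) * q (j+1)))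
      (fun u w : (∀ ℓ, Fin (d ℓ)) × Fin (s (r+1)) => ρ u w) := by
    refine (hfacFin.gram (fun (w : (∀ ℓ, Fin (d ℓ)) × Fin (s (r+1))) (cc : Fin DD × Fin ee) =>
      finalVec f d r q a t s DD ee eS D0 Dmat Emat Dr k0 ψm ⟨0, ht 0⟩ (w.1, w.2, cc))).congr
      (fun u w => ?_)
    rw [hρ]
    simp only [margSR, Matrix.of_apply, Fintype.sum_prod_type]
  -- structure of the server+reference marginal, per k
  have hstruct : ∀ k : Fin f,
      ∃ B : ((∀ j : {j : Fin f // j ≠ k}, Fin (d j.1)) × Fin (s (r+1))) →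
            ((∀ j : {j : Fin f // j ≠ k}, Fin (d j.1)) × Fin (s (r+1))) → ℂ,
        ∀ (u₁ u₂ : ∀ ℓ, Fin (d ℓ)) (s₁ s₂ : Fin (s (r+1))),
          margSR f d r q a t s DD ee eS D0 Dmat Emat Dr k ψm ⟨0, ht 0⟩ (u₁, s₁) (u₂, s₂)
            = (if u₁ k = u₂ k then ((d k : ℝ) : ℂ)⁻¹ else 0)
                * B ((fun j => u₁ j.1), s₁) ((fun j => u₂ j.1), s₂) := by
    intro k
    set Mk : (Fin DD × Fin (d k)) →
        (Fin (s (r+1)) × Fin ee × (∀ j : {j : Fin f // j ≠ k}, Fin (d j.1))) → ℂ :=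
      fun p w => finalVec f d r q a t s DD ee eS D0 Dmat Emat Dr k ψm ⟨0, ht 0⟩
        ((Equiv.piSplitAt k (fun ℓ => Fin (d ℓ))).symm (p.2, w.2.2), w.1, (p.1, w.2.1)) with hMk
    have hco := hcorrect k ψm hψnorm
    have hMM : ∀ p₁ p₂, ∑ w, Mk p₁ w * (starRingEnd ℂ) (Mk p₂ w)
        = ηf k p₁ * (starRingEnd ℂ) (ηf k p₂) := by
      intro p₁ p₂
      have h1 := congrFun (congrFun hco p₁) p₂
      simp only [margYR, Matrix.of_apply] at h1
      have h2 : ∑ w, Mk p₁ w * (starRingEnd ℂ) (Mk p₂ w)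
          = ∑ sv : Fin (s (r+1)), ∑ ev : Fin ee,
              ∑ z : (∀ j : {j : Fin f // j ≠ k}, Fin (d j.1)),
              finalVec f d r q a t s DD ee eS D0 Dmat Emat Dr k ψm ⟨0, ht 0⟩
                ((Equiv.piSplitAt k (fun ℓ => Fin (d ℓ))).symm (p₁.2, z), sv, (p₁.1, ev)) *
              (starRingEnd ℂ) (finalVec f d r q a t s DD ee eS D0 Dmat Emat Dr k ψm ⟨0, ht 0⟩
                ((Equiv.piSplitAt k (fun ℓ => Fin (d ℓ))).symm (p₂.2, z), sv, (p₂.1, ev))) := by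
        simp only [hMk, Fintype.sum_prod_type]
      rw [h2, h1, hηsum, hηsum]
    have hfacMk := rank_one_factor Mk (ηf k) hMM (hηnorm k)
    refine ⟨fun z₁ z₂ => ∑ ev : Fin ee,
        (∑ p', (starRingEnd ℂ) (ηf k p') * Mk p' (z₁.2, ev, z₁.1)) *
        (starRingEnd ℂ) (∑ p', (starRingEnd ℂ) (ηf k p') * Mk p' (z₂.2, ev, z₂.1)),
      fun u₁ u₂ s₁ s₂ => ?_⟩
    have hVM : ∀ (u : ∀ ℓ, Fin (d ℓ)) (sv : Fin (s (r+1))) (y : Fin DD) (ev : Fin ee),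
        finalVec f d r q a t s DD ee eS D0 Dmat Emat Dr k ψm ⟨0, ht 0⟩ (u, sv, (y, ev))
          = Mk (y, u k) (sv, ev, fun j => u j.1) := by
      intro u sv y ev
      simp only [hMk]
      rw [show (Equiv.piSplitAt k (fun ℓ => Fin (d ℓ))).symm (u k, fun j => u j.1) = u from
        (Equiv.piSplitAt k (fun ℓ => Fin (d ℓ))).symm_apply_apply u]
    calc margSR f d r q a t s DD ee eS D0 Dmat Emat Dr k ψm ⟨0, ht 0⟩ (u₁, s₁) (u₂, s₂)
        = ∑ y : Fin DD, ∑ ev : Fin ee,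
            (ηf k (y, u₁ k) * (∑ p', (starRingEnd ℂ) (ηf k p') * Mk p' (s₁, ev, fun j => u₁ j.1))) *
            (starRingEnd ℂ) (ηf k (y, u₂ k) *
              (∑ p', (starRingEnd ℂ) (ηf k p') * Mk p' (s₂, ev, fun j => u₂ j.1))) := by
          simp only [margSR, Matrix.of_apply]
          exact Finset.sum_congr rfl fun y _ => Finset.sum_congr rfl fun ev _ => by
            rw [hVM, hVM, hfacMk, hfacMk]
      _ = (∑ y : Fin DD, ηf k (y, u₁ k) * (starRingEnd ℂ) (ηf k (y, u₂ k))) *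
          (∑ ev : Fin ee,
            (∑ p', (starRingEnd ℂ) (ηf k p') * Mk p' (s₁, ev, fun j => u₁ j.1)) *
            (starRingEnd ℂ) (∑ p', (starRingEnd ℂ) (ηf k p') * Mk p' (s₂, ev, fun j => u₂ j.1))) := by
          rw [Finset.sum_mul_sum]
          exact Finset.sum_congr rfl fun y _ => Finset.sum_congr rfl fun ev _ => by
            simp only [_root_.map_mul]; ring
      _ = (if u₁ k = u₂ k then ((d k : ℝ) : ℂ)⁻¹ else 0) *
          (∑ ev : Fin ee,
            (∑ p', (starRingEnd ℂ) (ηf k p') * Mk p' (s₁, ev, fun j => u₁ j.1)) *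
            (starRingEnd ℂ) (∑ p', (starRingEnd ℂ) (ηf k p') * Mk p' (s₂, ev, fun j => u₂ j.1))) := by
          rw [hηip]
  have hsec : ∀ (k : Fin f) (u w : (∀ ℓ, Fin (d ℓ)) × Fin (s (r+1))),
      ρ u w = margSR f d r q a t s DD ee eS D0 Dmat Emat Dr k ψm ⟨0, ht 0⟩ u w := by
    intro k u w
    rw [hρ]
    exact congrFun (congrFun (hsecret ψm hψnorm k0 k) u) w
  have P1 : ∀ (k : Fin f) (u₁ u₂ : ∀ ℓ, Fin (d ℓ)) (s₁ s₂ : Fin (s (r+1))),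
      u₁ k ≠ u₂ k → ρ (u₁, s₁) (u₂, s₂) = 0 := by
    intro k u₁ u₂ s₁ s₂ hne
    obtain ⟨B, hB⟩ := hstruct k
    rw [hsec k (u₁, s₁) (u₂, s₂), hB, if_neg hne, zero_mul]
  have P2 : ∀ (u w : ∀ ℓ, Fin (d ℓ)) (s₁ s₂ : Fin (s (r+1))),
      ρ (u, s₁) (u, s₂) = ρ (w, s₁) (w, s₂) := by
    have single : ∀ (k : Fin f) (u : ∀ ℓ, Fin (d ℓ)) (x : Fin (d k)) (s₁ s₂ : Fin (s (r+1))),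
        ρ (Function.update u k x, s₁) (Function.update u k x, s₂) = ρ (u, s₁) (u, s₂) := by
      intro k u x s₁ s₂
      obtain ⟨B, hB⟩ := hstruct k
      rw [hsec k (Function.update u k x, s₁) (Function.update u k x, s₂),
        hsec k (u, s₁) (u, s₂), hB, hB]
      have hres : (fun j : {j : Fin f // j ≠ k} => Function.update u k x j.1)
          = fun j : {j : Fin f // j ≠ k} => u j.1 :=
        funext fun j => Function.update_of_ne j.2 _ _
      rw [hres, if_pos rfl, if_pos rfl]
    intro u w s₁ s₂
    have key : ∀ T : Finset (Fin f),
        ρ ((fun j => if j ∈ T then w j else u j), s₁)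
          ((fun j => if j ∈ T then w j else u j), s₂) = ρ (u, s₁) (u, s₂) := by
      intro T
      induction T using Finset.induction_on with
      | empty => simp
      | @insert k T hkT ih =>
        have hupd : (fun j => if j ∈ insert k T then w j else u j)
            = Function.update (fun j => if j ∈ T then w j else u j) k (w k) := by
          funext j
          by_cases hj : j = k
          · subst hj; simp
          · simp [Function.update_of_ne hj, Finset.mem_insert, hj]
        rw [hupd, single k _ (w k) s₁ s₂, ih]
    have h2 := key Finset.univ
    simp only [Finset.mem_univ, if_true] at h2
    exact h2.symm
  -- a nonvanishing diagonal entry in every block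
  have hsum1 : ∑ p : Fin DD × Fin (d k0),
      margYR f d r q a t s DD ee eS D0 Dmat Emat Dr k0 ψm ⟨0, ht 0⟩ p p = 1 := by
    have hco := hcorrect k0 ψm hψnorm
    calc ∑ p : Fin DD × Fin (d k0), margYR f d r q a t s DD ee eS D0 Dmat Emat Dr k0 ψm ⟨0, ht 0⟩ p p
        = ∑ p : Fin DD × Fin (d k0), ηf k0 p * (starRingEnd ℂ) (ηf k0 p) := by
          refine Finset.sum_congr rfl fun p _ => ?_
          calc margYR f d r q a t s DD ee eS D0 Dmat Emat Dr k0 ψm ⟨0, ht 0⟩ p p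
              = (∑ x₁ : Fin (d k0), ι k0 p.1 x₁ * ψm k0 (x₁, p.2)) *
                (starRingEnd ℂ) (∑ x₂ : Fin (d k0), ι k0 p.1 x₂ * ψm k0 (x₂, p.2)) :=
                congrFun (congrFun hco p) p
            _ = ηf k0 p * (starRingEnd ℂ) (ηf k0 p) := by rw [hηsum k0 p]
      _ = 1 := hηnorm k0
  have hVex : ∃ (u : ∀ ℓ, Fin (d ℓ)) (sv : Fin (s (r+1))) (y : Fin DD) (ev : Fin ee),
      finalVec f d r q a t s DD ee eS D0 Dmat Emat Dr k0 ψm ⟨0, ht 0⟩ (u, sv, (y, ev)) ≠ 0 := by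
    have h0 : ∑ p : Fin DD × Fin (d k0),
        margYR f d r q a t s DD ee eS D0 Dmat Emat Dr k0 ψm ⟨0, ht 0⟩ p p ≠ 0 := by
      rw [hsum1]; exact one_ne_zero
    obtain ⟨p, -, hp⟩ := Finset.exists_ne_zero_of_sum_ne_zero h0
    simp only [margYR, Matrix.of_apply] at hp
    obtain ⟨sv, -, hp⟩ := Finset.exists_ne_zero_of_sum_ne_zero hp
    obtain ⟨ev, -, hp⟩ := Finset.exists_ne_zero_of_sum_ne_zero hp
    obtain ⟨z, -, hp⟩ := Finset.exists_ne_zero_of_sum_ne_zero hp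
    exact ⟨(Equiv.piSplitAt k0 (fun ℓ => Fin (d ℓ))).symm (p.2, z), sv, p.1, ev,
      left_ne_zero_of_mul hp⟩
  have hdiag : ∃ sv : Fin (s (r+1)), ∀ u : ∀ ℓ, Fin (d ℓ), ρ (u, sv) (u, sv) ≠ 0 := by
    obtain ⟨u, sv, y, ev, hV⟩ := hVex
    refine ⟨sv, fun u' => ?_⟩
    rw [P2 u' u sv sv, hρ]
    simp only [margSR, Matrix.of_apply]
    have hcast : ∑ y' : Fin DD, ∑ ev' : Fin ee,
        finalVec f d r q a t s DD ee eS D0 Dmat Emat Dr k0 ψm ⟨0, ht 0⟩ (u, sv, (y', ev')) *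
        (starRingEnd ℂ) (finalVec f d r q a t s DD ee eS D0 Dmat Emat Dr k0 ψm ⟨0, ht 0⟩
          (u, sv, (y', ev')))
        = ((∑ y' : Fin DD, ∑ ev' : Fin ee, Complex.normSq
            (finalVec f d r q a t s DD ee eS D0 Dmat Emat Dr k0 ψm ⟨0, ht 0⟩
              (u, sv, (y', ev'))) : ℝ) : ℂ) := by
      push_cast
      exact Finset.sum_congr rfl fun y' _ => Finset.sum_congr rfl fun ev' _ =>
        (Complex.mul_conj _)
    rw [hcast, Complex.ofReal_ne_zero]
    have hpos : 0 < ∑ y' : Fin DD, ∑ ev' : Fin ee, Complex.normSq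
        (finalVec f d r q a t s DD ee eS D0 Dmat Emat Dr k0 ψm ⟨0, ht 0⟩ (u, sv, (y', ev'))) :=
      Finset.sum_pos' (fun _ _ => Finset.sum_nonneg fun _ _ => Complex.normSq_nonneg _)
        ⟨y, Finset.mem_univ y, Finset.sum_pos'
          (fun _ _ => Complex.normSq_nonneg _)
          ⟨ev, Finset.mem_univ ev, Complex.normSq_pos.mpr hV⟩⟩
    exact ne_of_gt hpos
  obtain ⟨sv0, hsv0⟩ := hdiag
  have hind : LinearIndependent ℂ (fun (i : ∀ ℓ, Fin (d ℓ)) =>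
      (fun rowp : (∀ ℓ, Fin (d ℓ)) × Fin (s (r+1)) => ρ rowp (i, sv0))) := by
    rw [Fintype.linearIndependent_iff]
    intro coef hsum0 i₀
    have h0 := congrFun hsum0 (i₀, sv0)
    simp only [Finset.sum_apply, Pi.smul_apply, smul_eq_mul, Pi.zero_apply] at h0
    rw [Finset.sum_eq_single i₀] at h0
    · rcases mul_eq_zero.mp h0 with h | h
      · exact h
      · exact absurd h (hsv0 i₀)
    · intro i _ hne
      have hex : ∃ k, i₀ k ≠ i k := by
        by_contra hc
        push_neg at hc
        exact hne (funext fun k => (hc k).symm)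
      obtain ⟨k, hk⟩ := hex
      rw [P1 k i₀ i sv0 sv0 hk, mul_zero]
    · intro h; exact absurd (Finset.mem_univ i₀) h
  have hcard : Fintype.card (∀ ℓ, Fin (d ℓ)) ≤ ∏ j ∈ Finset.range (r+1), (a (j+1) * q (j+1)) :=
    card_le_of_factor (ρ := fun u w => ρ u w) hfacρ (fun i => (i, sv0)) hind
  have hNle : (∏ ℓ, d ℓ) ≤ ∏ j ∈ Finset.range (r+1), (a (j+1) * q (j+1)) := by
    calc (∏ ℓ, d ℓ) = Fintype.card (∀ ℓ, Fin (d ℓ)) := by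
          rw [Fintype.card_pi]
          exact Finset.prod_congr rfl fun ℓ _ => (Fintype.card_fin _).symm
      _ ≤ _ := hcard
  -- conclude with logarithms
  have haR : ∀ j, (0:ℝ) < (a (j+1) : ℝ) := fun j => by exact_mod_cast ha (j+1)
  have hqR : ∀ j, (0:ℝ) < (q (j+1) : ℝ) := fun j => by exact_mod_cast hq (j+1)
  have hlog : Real.log (∏ ℓ, (d ℓ : ℝ))
      ≤ Real.log (∏ j ∈ Finset.range (r+1), ((a (j+1) : ℝ) * (q (j+1) : ℝ))) := by
    apply Real.log_le_log (Finset.prod_pos fun ℓ _ => hdR ℓ)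
    have h' : ((∏ ℓ, d ℓ : ℕ) : ℝ) ≤ ((∏ j ∈ Finset.range (r+1), (a (j+1) * q (j+1)) : ℕ) : ℝ) :=
      Nat.cast_le.mpr hNle
    push_cast at h'
    exact h'
  calc ∑ ℓ : Fin f, Real.log (d ℓ)
      = Real.log (∏ ℓ, (d ℓ : ℝ)) :=
        (Real.log_prod fun ℓ _ => (hdR ℓ).ne').symm
    _ ≤ Real.log (∏ j ∈ Finset.range (r+1), ((a (j+1) : ℝ) * (q (j+1) : ℝ))) := hlog
    _ = ∑ j ∈ Finset.range (r+1), Real.log ((a (j+1) : ℝ) * (q (j+1) : ℝ)) :=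
        Real.log_prod fun j _ => (mul_pos (haR j) (hqR j)).ne'
    _ = ∑ j ∈ Finset.range (r+1), (Real.log (q (j+1)) + Real.log (a (j+1))) := by
        refine Finset.sum_congr rfl fun j _ => ?_
        rw [Real.log_mul (haR j).ne' (hqR j).ne', add_comm]
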